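/- Let T : S → M_{d'} be a linear map on a linear subspace S ⊂ M_d. Assume T_k : M_d → M_{d'} is a sequence of completely positive linear maps with T_k(X) → T(X) (in norm) as k → ∞ for every X ∈ S, but that no completely positive linear map T̃ : M_d → M_{d'} satisfies T̃(X) = T(X) for all X ∈ S. Then ‖T_k^*(I)‖ → ∞ as k → ∞, where T_k^* : M_{d'} → M_d is the dual map of T_k and I the identity matrix. -/

import Mathlib

open scoped Kronecker ComplexOrder Matrix.Norms.L2Operator
open Matrix Filter Classical

/-- `M_d`, the algebra of `d × d` complex matrices. -/
abbrev Mat (d : ℕ) := Matrix (Fin d) (Fin d) ℂ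

/-- A linear map `T : S → M_{d'}` on a subspace `S ⊆ M_d` is completely positive if for
every `n` and every positive semidefinite `P = Σ_j X_j ⊗ K_j` with `X_j ∈ S`, `K_j ∈ M_n`,
the matrix `(T ⊗ id_n)(P) = Σ_j T(X_j) ⊗ K_j` is positive semidefinite. -/
def IsCPOn {d d' : ℕ} (S : Submodule ℂ (Mat d)) (T : S →ₗ[ℂ] Mat d') : Prop :=
  ∀ (n m : ℕ) (X : Fin m → S) (K : Fin m → Matrix (Fin n) (Fin n) ℂ),
    (∑ j, (X j : Mat d) ⊗ₖ K j).PosSemidef →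
    (∑ j, (T (X j)) ⊗ₖ K j).PosSemidef

/-- Complete positivity for a linear map defined on all of `M_d`. -/
def IsCP {d d' : ℕ} (T : Mat d →ₗ[ℂ] Mat d') : Prop :=
  ∀ (n m : ℕ) (X : Fin m → Mat d) (K : Fin m → Matrix (Fin n) (Fin n) ℂ),
    (∑ j, X j ⊗ₖ K j).PosSemidef →
    (∑ j, T (X j) ⊗ₖ K j).PosSemidef

section Aux

-- limit of PSD matrices is PSD (entrywise convergence)
lemma psd_limit {ι : Type*} [Fintype ι] {M : ℕ → Matrix ι ι ℂ} {A : Matrix ι ι ℂ}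
    (hM : ∀ n, (M n).PosSemidef)
    (h : ∀ p q, Tendsto (fun n => M n p q) atTop (nhds (A p q))) : A.PosSemidef := by
  refine PosSemidef.of_dotProduct_mulVec_nonneg ?_ ?_
  · ext p q
    rw [conjTranspose_apply]
    have h1 : Tendsto (fun n => star (M n q p)) atTop (nhds (star (A q p))) :=
      (Complex.continuous_conj.tendsto _).comp (h q p)
    have h2 : ∀ n, star (M n q p) = M n p q := fun n => by
      rw [← conjTranspose_apply, (hM n).1]
    simp only [h2] at h1
    exact tendsto_nhds_unique h1 (h p q)
  · intro x
    have hq : ∀ n, (0:ℂ) ≤ dotProduct (star x) (M n *ᵥ x) := fun n => (hM n).dotProduct_mulVec_nonneg x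
    have ht : Tendsto (fun n => dotProduct (star x) (M n *ᵥ x)) atTop
        (nhds (dotProduct (star x) (A *ᵥ x))) := by
      simp only [dotProduct, mulVec]
      apply tendsto_finset_sum
      intro p _
      apply Tendsto.const_mul
      apply tendsto_finset_sum
      intro q _
      exact (h p q).mul_const _
    exact ge_of_tendsto' ht hq


lemma kron_one_fin1 {k : ℕ} (P : Mat k) :
    P ⊗ₖ (1 : Matrix (Fin 1) (Fin 1) ℂ) = P.submatrix Prod.fst Prod.fst := by
  ext ⟨i, a⟩ ⟨j, b⟩
  simp [Matrix.one_apply, Subsingleton.elim a b]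

lemma cp_pos {d d' : ℕ} {T : Mat d →ₗ[ℂ] Mat d'} (hT : IsCP T) {P : Mat d}
    (hP : P.PosSemidef) : (T P).PosSemidef := by
  have h1 : (∑ j : Fin 1, P ⊗ₖ (1 : Matrix (Fin 1) (Fin 1) ℂ)).PosSemidef := by
    rw [Fin.sum_univ_one, kron_one_fin1]
    exact hP.submatrix _
  have h2 := hT 1 1 (fun _ => P) (fun _ => 1) h1
  rw [Fin.sum_univ_one, kron_one_fin1] at h2
  have : T P = (T P ⊗ₖ (1 : Matrix (Fin 1) (Fin 1) ℂ)).submatrix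
      (fun i => (i, (0 : Fin 1))) (fun i => (i, (0 : Fin 1))) := by
    ext i j; simp [Matrix.one_apply]
  rw [this, kron_one_fin1]
  exact h2.submatrix _

lemma psd_diag_nonneg {ι : Type*} [Fintype ι] [DecidableEq ι] {M : Matrix ι ι ℂ}
    (hM : M.PosSemidef) (i : ι) : (0:ℂ) ≤ M i i := by
  have := hM.dotProduct_mulVec_nonneg (Pi.single i 1)
  simpa [← Pi.single_star, mulVec_single, single_dotProduct] using this

lemma psd_entry_le_trace {ι : Type*} [Fintype ι] [DecidableEq ι] {M : Matrix ι ι ℂ}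
    (hM : M.PosSemidef) (i j : ι) : ‖M i j‖ ≤ M.trace.re := by
  have hdiag : ∀ a, 0 ≤ (M a a).re ∧ (M a a).im = 0 := by
    intro a
    have := psd_diag_nonneg hM a
    exact ⟨(Complex.le_def.mp this).1, ((Complex.le_def.mp this).2).symm⟩
  have htr : M.trace.re = ∑ a, (M a a).re := by
    simp [Matrix.trace, Matrix.diag, Complex.re_sum]
  by_cases hij : i = j
  · subst hij
    have : ‖M i i‖ = (M i i).re := by
      rw [Complex.norm_def, Complex.normSq_apply, (hdiag i).2]
      simp only [mul_zero, add_zero]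
      rw [Real.sqrt_mul_self (hdiag i).1]
    rw [this, htr]
    exact Finset.single_le_sum (fun a _ => (hdiag a).1) (Finset.mem_univ i)
  · -- i ≠ j
    set z := M i j with hz
    by_cases hz0 : z = 0
    · rw [htr, hz0]
      simp only [norm_zero]
      exact Finset.sum_nonneg (fun a _ => (hdiag a).1)
    set nz : ℝ := ‖z‖ with hnz
    have hnzpos : 0 < nz := by rw [hnz]; exact norm_pos_iff.mpr hz0
    set x : ι → ℂ := Pi.single i (nz : ℂ) + Pi.single j (-(star z)) with hxdef
    have hQ := hM.dotProduct_mulVec_nonneg x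
    have hstar : star x = Pi.single i (nz : ℂ) + Pi.single j (-z) := by
      rw [hxdef, star_add, ← Pi.single_star, ← Pi.single_star]
      simp
    have hmv : M *ᵥ x = (fun a => M a i * (nz:ℂ)) + (fun a => M a j * (-(star z))) := by
      rw [hxdef, mulVec_add, mulVec_single, mulVec_single]
      ext a; simp [mul_comm]
    have hji : M j i = star z := by
      rw [hz, ← conjTranspose_apply, hM.1]
    have hzz : z * star z = (nz:ℂ)^2 := by
      rw [Complex.star_def, Complex.mul_conj, Complex.normSq_eq_norm_sq, hnz]
      push_cast
      ring
    have hQval : dotProduct (star x) (M *ᵥ x)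
        = (nz:ℂ)^2 * (M i i + M j j) - 2 * (nz:ℂ)^3 := by
      rw [hstar, hmv]
      simp only [add_dotProduct, dotProduct_add, single_dotProduct, Pi.add_apply]
      rw [hji]
      linear_combination (M j j - 2*(nz:ℂ)) * hzz
    rw [hQval] at hQ
    have hre := (Complex.le_def.mp hQ).1
    have hre' : 0 ≤ nz^2 * ((M i i).re + (M j j).re) - 2 * nz^3 := by
      have : ((nz:ℂ)^2 * (M i i + M j j) - 2 * (nz:ℂ)^3).re
          = nz^2 * ((M i i).re + (M j j).re) - 2 * nz^3 := by
        simp [Complex.sub_re, Complex.mul_re, Complex.add_re, ← Complex.ofReal_pow,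
          Complex.ofReal_re, Complex.ofReal_im]
      rw [this] at hre
      simpa using hre
    have hsum : (M i i).re + (M j j).re ≤ M.trace.re := by
      rw [htr]
      have h1 : ∑ a ∈ ({i, j} : Finset ι), (M a a).re ≤ ∑ a, (M a a).re :=
        Finset.sum_le_sum_of_subset_of_nonneg (Finset.subset_univ _)
          (fun a _ _ => (hdiag a).1)
      rwa [Finset.sum_pair hij] at h1
    nlinarith [hre', hsum, hnzpos, mul_pos hnzpos hnzpos]

lemma vecMulVec_star_psd {ι : Type*} [Fintype ι] (v : ι → ℂ) :
    (vecMulVec v (star v)).PosSemidef := by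
  refine PosSemidef.of_dotProduct_mulVec_nonneg ?_ ?_
  · ext a b
    simp [vecMulVec_apply, conjTranspose_apply, mul_comm]
  · intro x
    have : dotProduct (star x) (vecMulVec v (star v) *ᵥ x)
        = (star x ⬝ᵥ v) * star (star x ⬝ᵥ v) := by
      simp only [dotProduct, mulVec, vecMulVec_apply, Pi.star_apply]
      simp only [star_sum, star_mul', star_star]
      rw [Finset.sum_mul]
      congr 1
      funext a
      rw [Finset.mul_sum, Finset.mul_sum]
      congr 1
      funext b
      ring
    rw [this, Complex.star_def, Complex.mul_conj]
    exact Complex.zero_le_real.mpr (Complex.normSq_nonneg _)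

-- decomposition of Matrix.single into PSD matrices
lemma stdBasis_decomp {k : ℕ} {i j : Fin k} (hij : i ≠ j) :
    (Matrix.single i j (1:ℂ)) =
      (1/2 : ℂ) • vecMulVec (Pi.single i 1 + Pi.single j 1)
          (star (Pi.single i 1 + Pi.single j 1))
      + (Complex.I/2) • vecMulVec (Pi.single i 1 + Pi.single j Complex.I)
          (star (Pi.single i 1 + Pi.single j Complex.I))
      - ((1+Complex.I)/2) • vecMulVec (Pi.single i (1:ℂ)) (star (Pi.single i (1:ℂ)))
      - ((1+Complex.I)/2) • vecMulVec (Pi.single j (1:ℂ)) (star (Pi.single j (1:ℂ))) := by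
  funext a b
  simp only [Matrix.sub_apply, Matrix.add_apply, Matrix.smul_apply, vecMulVec_apply,
    Pi.add_apply, Pi.star_apply, star_add, Pi.single_apply, Matrix.single,
    Matrix.of_apply, apply_ite, star_one, star_zero, Complex.star_def,
    _root_.map_one, map_zero, Complex.conj_I, smul_eq_mul]
  by_cases ha : a = i <;> by_cases hb : b = j <;> by_cases ha' : a = j <;>
    by_cases hb' : b = i <;> simp_all
  all_goals try (simp_all [eq_comm])
  all_goals (ring_nf; try simp [Complex.I_sq]; try ring_nf)

lemma norm_le_entries {k : ℕ} (M : Mat k) (t : ℝ) (h : ∀ i j, ‖M i j‖ ≤ t) :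
    ‖M‖ ≤ t * ∑ i : Fin k, ∑ j : Fin k, ‖(Matrix.single i j (1:ℂ) : Mat k)‖ := by
  conv_lhs => rw [matrix_eq_sum_single M]
  calc ‖∑ i : Fin k, ∑ j : Fin k, Matrix.single i j (M i j)‖
      ≤ ∑ i : Fin k, ∑ j : Fin k, ‖Matrix.single i j (M i j)‖ := by
        apply norm_sum_le _ _ |>.trans
        exact Finset.sum_le_sum fun i _ => norm_sum_le _ _
    _ ≤ ∑ i : Fin k, ∑ j : Fin k, t * ‖(Matrix.single i j (1:ℂ) : Mat k)‖ := by
        apply Finset.sum_le_sum; intro i _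
        apply Finset.sum_le_sum; intro j _
        have : Matrix.single i j (M i j) = M i j • Matrix.single i j (1:ℂ) := by
          rw [smul_single, smul_eq_mul, mul_one]
        rw [this, norm_smul]
        exact mul_le_mul_of_nonneg_right (h i j) (norm_nonneg _)
    _ = t * ∑ i : Fin k, ∑ j : Fin k, ‖(Matrix.single i j (1:ℂ) : Mat k)‖ := by
        rw [Finset.mul_sum]
        congr 1; funext i
        rw [Finset.mul_sum]

lemma trace_clm_bound {k : ℕ} (P : Mat k) :
    ∃ c : ℝ, 0 ≤ c ∧ ∀ A : Mat k, ‖((Aᴴ * P).trace)‖ ≤ c * ‖A‖ := by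
  let f : Mat k →ₗ[ℝ] ℂ :=
    { toFun := fun A => (Aᴴ * P).trace
      map_add' := fun A B => by simp [conjTranspose_add, add_mul]
      map_smul' := fun r A => by simp [conjTranspose_smul, smul_mul_assoc] }
  have hf : Continuous f := f.continuous_of_finiteDimensional
  exact ⟨‖(⟨f, hf⟩ : Mat k →L[ℝ] ℂ)‖, ContinuousLinearMap.opNorm_nonneg _,
    fun A => ContinuousLinearMap.le_opNorm (⟨f, hf⟩ : Mat k →L[ℝ] ℂ) A⟩

lemma tendsto_entry_aux {k : ℕ} {f : ℕ → Mat k} {A : Mat k}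
    (h : Tendsto f atTop (nhds A)) (i j : Fin k) :
    Tendsto (fun n => f n i j) atTop (nhds (A i j)) := by
  let e : Mat k →ₗ[ℂ] ℂ :=
    { toFun := fun M => M i j
      map_add' := fun _ _ => rfl
      map_smul' := fun _ _ => rfl }
  exact ((e.continuous_of_finiteDimensional).tendsto A).comp h

lemma stdBasis_diag {k : ℕ} (i : Fin k) :
    (Matrix.single i i (1:ℂ)) = vecMulVec (Pi.single i 1) (star (Pi.single i 1)) := by
  funext a b
  simp only [Matrix.single, Matrix.of_apply, vecMulVec_apply, Pi.star_apply,
    Pi.single_apply]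
  by_cases ha : a = i <;> by_cases hb : b = i <;> simp_all [eq_comm]

lemma decomp_matrix {k : ℕ} (X : Mat k) :
    X = ∑ p : Fin k × Fin k, X p.1 p.2 • Matrix.single p.1 p.2 (1:ℂ) := by
  conv_lhs => rw [matrix_eq_sum_single X]
  rw [Fintype.sum_prod_type]
  congr 1; funext i; congr 1; funext j
  rw [smul_single, smul_eq_mul, mul_one]


end Aux

/-- If completely positive maps `T_k` converge pointwise on `S` to `T`, but `T` has no
completely positive extension to `M_d`, then `‖T_k^*(I)‖ → ∞`. -/
theorem stmt5 {d d' : ℕ} (S : Submodule ℂ (Mat d)) (T : S →ₗ[ℂ] Mat d')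
    (Tk : ℕ → (Mat d →ₗ[ℂ] Mat d'))
    (hCP : ∀ k, IsCP (Tk k))
    (hconv : ∀ X (hX : X ∈ S), Tendsto (fun k => Tk k X) atTop (nhds (T ⟨X, hX⟩)))
    (hnoext : ¬ ∃ T' : Mat d →ₗ[ℂ] Mat d', IsCP T' ∧ ∀ X (hX : X ∈ S), T' X = T ⟨X, hX⟩)
    (Tk' : ℕ → (Mat d' →ₗ[ℂ] Mat d))
    (hdual : ∀ (k : ℕ) (Xm : Mat d) (Y : Mat d'),
      (Yᴴ * Tk k Xm).trace = ((Tk' k Y)ᴴ * Xm).trace) :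
    Tendsto (fun k => ‖Tk' k (1 : Mat d')‖) atTop atTop := by
  by_contra hnot
  rw [tendsto_atTop] at hnot
  push_neg at hnot
  obtain ⟨C, hC⟩ := hnot
  have hC' : ∃ᶠ k in atTop, ‖Tk' k (1 : Mat d')‖ ≤ C := hC.mono (fun k hk => hk.le)
  obtain ⟨φ, hφmono, hφ⟩ := Filter.extraction_of_frequently_atTop hC'
  have hC0 : 0 ≤ C := (norm_nonneg _).trans (hφ 0)
  -- trace identity
  have htrace : ∀ k (P : Mat d), (Tk k P).trace = ((Tk' k (1 : Mat d'))ᴴ * P).trace := by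
    intro k P
    have := hdual k P 1
    rwa [conjTranspose_one, one_mul] at this
  -- uniform bound on Tk (φ n) P for PSD P
  set cE : ℝ := ∑ i : Fin d', ∑ j : Fin d', ‖(Matrix.single i j (1:ℂ) : Mat d')‖ with hcE
  have hcE0 : 0 ≤ cE := Finset.sum_nonneg fun i _ => Finset.sum_nonneg fun j _ => norm_nonneg _
  have key : ∀ (P : Mat d), P.PosSemidef → ∃ R, ∀ n, ‖Tk (φ n) P‖ ≤ R := by
    intro P hP
    obtain ⟨c, hc0, hc⟩ := trace_clm_bound (k := d) P
    refine ⟨(c * C) * cE, fun n => ?_⟩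
    have hpsd : (Tk (φ n) P).PosSemidef := cp_pos (hCP (φ n)) hP
    have htre : (Tk (φ n) P).trace.re ≤ c * C := by
      rw [htrace]
      calc ((Tk' (φ n) (1 : Mat d'))ᴴ * P).trace.re
          ≤ ‖((Tk' (φ n) (1 : Mat d'))ᴴ * P).trace‖ := Complex.re_le_norm _
        _ ≤ c * ‖Tk' (φ n) (1 : Mat d')‖ := hc _
        _ ≤ c * C := mul_le_mul_of_nonneg_left (hφ n) hc0
    have h1 : ‖Tk (φ n) P‖ ≤ (Tk (φ n) P).trace.re * cE :=
      norm_le_entries _ _ (fun i j => psd_entry_le_trace hpsd i j)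
    exact h1.trans (mul_le_mul_of_nonneg_right htre hcE0)
  -- bound on basis elements
  set B : Fin d × Fin d → Mat d := fun p => Matrix.single p.1 p.2 (1:ℂ) with hB
  have hbd : ∀ p : Fin d × Fin d, ∃ R, ∀ n, ‖Tk (φ n) (B p)‖ ≤ R := by
    rintro ⟨i, j⟩
    by_cases hij : i = j
    · subst hij
      have := key (vecMulVec (Pi.single i 1) (star (Pi.single i 1))) (vecMulVec_star_psd _)
      simpa only [hB, stdBasis_diag] using this
    · obtain ⟨R1, hR1⟩ := key _ (vecMulVec_star_psd (Pi.single i 1 + Pi.single j 1))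
      obtain ⟨R2, hR2⟩ := key _ (vecMulVec_star_psd (Pi.single i 1 + Pi.single j Complex.I))
      obtain ⟨R3, hR3⟩ := key _ (vecMulVec_star_psd (Pi.single i (1:ℂ)))
      obtain ⟨R4, hR4⟩ := key _ (vecMulVec_star_psd (Pi.single j (1:ℂ)))
      refine ⟨R1 + R2 + R3 + R4, fun n => ?_⟩
      have hdec := stdBasis_decomp (k := d) hij
      have : Tk (φ n) (B (i, j)) =
          (1/2 : ℂ) • Tk (φ n) (vecMulVec (Pi.single i 1 + Pi.single j 1)
            (star (Pi.single i 1 + Pi.single j 1)))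
          + (Complex.I/2) • Tk (φ n) (vecMulVec (Pi.single i 1 + Pi.single j Complex.I)
            (star (Pi.single i 1 + Pi.single j Complex.I)))
          - ((1+Complex.I)/2) • Tk (φ n) (vecMulVec (Pi.single i (1:ℂ))
            (star (Pi.single i (1:ℂ))))
          - ((1+Complex.I)/2) • Tk (φ n) (vecMulVec (Pi.single j (1:ℂ))
            (star (Pi.single j (1:ℂ)))) := by
        simp only [hB]
        rw [hdec]
        simp only [map_add, map_sub, _root_.map_smul]
      rw [this]
      have hco1 : ‖(1/2 : ℂ)‖ ≤ 1 := by norm_num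
      have hco2 : ‖(Complex.I/2 : ℂ)‖ ≤ 1 := by
        rw [norm_div, Complex.norm_I]
        norm_num
      have hco3 : ‖((1+Complex.I)/2 : ℂ)‖ ≤ 1 := by
        rw [norm_div]
        calc ‖(1+Complex.I : ℂ)‖ / ‖(2:ℂ)‖ ≤ (‖(1:ℂ)‖ + ‖Complex.I‖) / ‖(2:ℂ)‖ := by
              apply div_le_div_of_nonneg_right ?_ ?_ |>.trans_eq rfl
              · exact norm_add_le _ _
              · norm_num
          _ ≤ 1 := by rw [norm_one, Complex.norm_I]; norm_num
      calc ‖_ + _ - _ - _‖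
          ≤ ‖_ + _ - _‖ + ‖((1+Complex.I)/2) • Tk (φ n) (vecMulVec (Pi.single j (1:ℂ))
              (star (Pi.single j (1:ℂ))))‖ := norm_sub_le _ _
        _ ≤ (‖_ + _‖ + ‖((1+Complex.I)/2) • Tk (φ n) (vecMulVec (Pi.single i (1:ℂ))
              (star (Pi.single i (1:ℂ))))‖) + _ := by
              gcongr
              exact norm_sub_le _ _
        _ ≤ ((‖(1/2 : ℂ) • Tk (φ n) (vecMulVec (Pi.single i 1 + Pi.single j 1)
              (star (Pi.single i 1 + Pi.single j 1)))‖
              + ‖(Complex.I/2) • Tk (φ n) (vecMulVec (Pi.single i 1 + Pi.single j Complex.I)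
              (star (Pi.single i 1 + Pi.single j Complex.I)))‖) + _) + _ := by
              gcongr
              exact norm_add_le _ _
        _ ≤ R1 + R2 + R3 + R4 := by
              simp only [norm_smul]
              have e1 := hR1 n; have e2 := hR2 n; have e3 := hR3 n; have e4 := hR4 n
              have n1 : (0:ℝ) ≤ ‖Tk (φ n) (vecMulVec (Pi.single i 1 + Pi.single j 1)
                (star (Pi.single i 1 + Pi.single j 1)))‖ := norm_nonneg _
              nlinarith [norm_nonneg (Tk (φ n) (vecMulVec (Pi.single i 1 + Pi.single j Complex.I)
                (star (Pi.single i 1 + Pi.single j Complex.I)))),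
                norm_nonneg (Tk (φ n) (vecMulVec (Pi.single i (1:ℂ)) (star (Pi.single i (1:ℂ))))),
                norm_nonneg (Tk (φ n) (vecMulVec (Pi.single j (1:ℂ)) (star (Pi.single j (1:ℂ))))),
                (norm_nonneg (Tk (φ n) (vecMulVec (Pi.single i 1 + Pi.single j 1)
                  (star (Pi.single i 1 + Pi.single j 1))))).trans e1,
                (norm_nonneg _).trans e2, (norm_nonneg _).trans e3, (norm_nonneg _).trans e4]
  choose R hR using hbd
  set R0 : ℝ := ∑ p : Fin d × Fin d, |R p| with hR0def
  have hR0 : ∀ p n, ‖Tk (φ n) (B p)‖ ≤ R0 := by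
    intro p n
    calc ‖Tk (φ n) (B p)‖ ≤ R p := hR p n
      _ ≤ |R p| := le_abs_self _
      _ ≤ R0 := Finset.single_le_sum (fun q _ => abs_nonneg (R q)) (Finset.mem_univ p)
  have hR0nn : 0 ≤ R0 := Finset.sum_nonneg fun q _ => abs_nonneg _
  -- compactness
  set g : ℕ → ((Fin d × Fin d) → Mat d') := fun n p => Tk (φ n) (B p) with hg
  haveI : FiniteDimensional ℝ ((Fin d × Fin d) → Mat d') := by infer_instance
  haveI : ProperSpace ((Fin d × Fin d) → Mat d') :=
    FiniteDimensional.proper ℝ ((Fin d × Fin d) → Mat d')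
  have hgmem : ∀ n, g n ∈ Metric.closedBall (0 : (Fin d × Fin d) → Mat d') R0 := by
    intro n
    rw [mem_closedBall_zero_iff]
    rw [pi_norm_le_iff_of_nonneg hR0nn]
    intro p
    exact hR0 p n
  obtain ⟨L, -, ψ, hψmono, hgψ⟩ :=
    tendsto_subseq_of_bounded (Metric.isBounded_closedBall
      (x := (0 : (Fin d × Fin d) → Mat d')) (r := R0)) hgmem
  have hcoord : ∀ p, Tendsto (fun n => Tk (φ (ψ n)) (B p)) atTop (nhds (L p)) := by
    intro p
    have := tendsto_pi_nhds.mp hgψ p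
    exact this
  -- the limit map
  set T' : Mat d →ₗ[ℂ] Mat d' :=
    { toFun := fun X => ∑ p : Fin d × Fin d, X p.1 p.2 • L p
      map_add' := by
        intro X Y
        simp only [Matrix.add_apply, add_smul, Finset.sum_add_distrib]
      map_smul' := by
        intro c X
        simp only [Matrix.smul_apply, smul_eq_mul, mul_smul, RingHom.id_apply,
          Finset.smul_sum] } with hT'
  have hTlim : ∀ X : Mat d, Tendsto (fun n => Tk (φ (ψ n)) X) atTop (nhds (T' X)) := by
    intro X
    have hXd : ∀ k, Tk k X = ∑ p : Fin d × Fin d, X p.1 p.2 • Tk k (B p) := by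
      intro k
      conv_lhs => rw [decomp_matrix X]
      rw [map_sum]
      simp only [_root_.map_smul]
      rfl
    simp only [hXd]
    have : T' X = ∑ p : Fin d × Fin d, X p.1 p.2 • L p := rfl
    rw [this]
    exact tendsto_finset_sum _ fun p _ => (hcoord p).const_smul (X p.1 p.2)
  apply hnoext
  refine ⟨T', ?_, ?_⟩
  · -- T' is CP
    intro n m Xs Ks hpsd
    apply psd_limit (M := fun t => ∑ j, Tk (φ (ψ t)) (Xs j) ⊗ₖ Ks j)
    · exact fun t => hCP (φ (ψ t)) n m Xs Ks hpsd
    · intro p q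
      simp only [Matrix.sum_apply, kroneckerMap_apply]
      exact tendsto_finset_sum _ fun j _ =>
        (tendsto_entry_aux (hTlim (Xs j)) p.1 q.1).mul_const (Ks j p.2 q.2)
  · -- T' extends T
    intro X hX
    have h1 := hTlim X
    have h2 : Tendsto (fun n => Tk (φ (ψ n)) X) atTop (nhds (T ⟨X, hX⟩)) :=
      (hconv X hX).comp ((hφmono.comp hψmono).tendsto_atTop)
    exact tendsto_nhds_unique h1 h2
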